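/- Let f be a multiplicative function with |f(p)| ≤ B for some constant B, and define the exponentially multiplicative function φ by φ(p^ν) = f(p)^ν/(2^ν ν!). Then there exists a multiplicative function ψ with ψ(p) = 0 for all primes p such that f = φ * φ * ψ (Dirichlet convolution), where ψ(p^ν) = ∑_{0≤j≤ν} (−1)^j f(p)^j f(p^{ν−j})/j! for ν ≥ 1. -/

import Mathlib

open Finset ArithmeticFunction

/-- Build an arithmetic function from values on prime powers. -/
noncomputable def ofPrimePow (h : ℕ → ℕ → ℂ) : ArithmeticFunction ℂ :=
  ⟨fun n => if n = 0 then 0 else n.factorization.prod fun p k => h p k, by simp⟩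

lemma ofPrimePow_apply (h : ℕ → ℕ → ℂ) {n : ℕ} (hn : n ≠ 0) :
    ofPrimePow h n = n.factorization.prod fun p k => h p k := by
  simp [ofPrimePow, hn]

lemma ofPrimePow_isMultiplicative (h : ℕ → ℕ → ℂ) (h0 : ∀ p, h p 0 = 1) :
    (ofPrimePow h).IsMultiplicative := by
  constructor
  · rw [ofPrimePow_apply h one_ne_zero]
    simp
  · intro m n hmn
    rcases eq_or_ne m 0 with rfl | hm
    · simp [ofPrimePow]
    rcases eq_or_ne n 0 with rfl | hn
    · simp [ofPrimePow]
    rw [ofPrimePow_apply h (mul_ne_zero hm hn), ofPrimePow_apply h hm, ofPrimePow_apply h hn,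
      Nat.factorization_mul_of_coprime hmn, Finsupp.prod_add_index_of_disjoint]
    exact hmn.disjoint_primeFactors

lemma ofPrimePow_apply_prime_pow (h : ℕ → ℕ → ℂ) (h0 : ∀ p, h p 0 = 1)
    {p : ℕ} (hp : p.Prime) (k : ℕ) : ofPrimePow h (p ^ k) = h p k := by
  rw [ofPrimePow_apply h (pow_ne_zero k hp.pos.ne'), Nat.Prime.factorization_pow hp,
    Finsupp.prod_single_index (h0 p)]

lemma mul_apply_prime_pow (a b : ArithmeticFunction ℂ) {p : ℕ} (hp : p.Prime) (k : ℕ) :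
    (a * b) (p ^ k) = ∑ j ∈ Finset.range (k + 1), a (p ^ j) * b (p ^ (k - j)) := by
  rw [mul_apply, Nat.sum_divisorsAntidiagonal (a · * b ·), Nat.sum_divisors_prime_pow hp]
  refine Finset.sum_congr rfl fun j hj => ?_
  rw [Finset.mem_range] at hj
  congr 1
  rw [← Nat.pow_div (by omega) hp.pos]

theorem factorization_f_eq_phi_phi_psi (B : ℝ) (f φ : ArithmeticFunction ℂ)
    (hfmul : f.IsMultiplicative)
    (hB : ∀ p : ℕ, p.Prime → ‖f p‖ ≤ B)
    (hφmul : φ.IsMultiplicative)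
    (hφval : ∀ (p ν : ℕ), p.Prime → 1 ≤ ν →
      φ (p ^ ν) = f p ^ ν / (2 ^ ν * Nat.factorial ν)) :
    ∃ ψ : ArithmeticFunction ℂ, ψ.IsMultiplicative ∧
      (∀ p : ℕ, p.Prime → ψ p = 0) ∧
      (∀ (p ν : ℕ), p.Prime → 1 ≤ ν →
        ψ (p ^ ν) = ∑ j ∈ Finset.range (ν + 1),
          (-1) ^ j * f p ^ j * f (p ^ (ν - j)) / Nat.factorial j) ∧
      f = φ * φ * ψ := by
  classical
  -- the Dirichlet inverse of φ
  set hι : ℕ → ℕ → ℂ := fun p k => (-(f p)) ^ k / (2 ^ k * Nat.factorial k) with hιdef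
  have hι0 : ∀ p, hι p 0 = 1 := by intro p; simp [hιdef]
  set ι : ArithmeticFunction ℂ := ofPrimePow hι with ιdef
  have hιmul : ι.IsMultiplicative := ofPrimePow_isMultiplicative _ hι0
  have hιval : ∀ {p : ℕ}, p.Prime → ∀ k, ι (p ^ k) = (-(f p)) ^ k / (2 ^ k * Nat.factorial k) :=
    fun hp k => ofPrimePow_apply_prime_pow _ hι0 hp k
  have hφval' : ∀ {p : ℕ}, p.Prime → ∀ k, φ (p ^ k) = f p ^ k / (2 ^ k * Nat.factorial k) := by
    intro p hp k
    rcases Nat.eq_zero_or_pos k with rfl | hk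
    · simp [hφmul.1]
    · exact hφval p k hp hk
  -- φ * ι = 1
  have key : φ * ι = 1 := by
    rw [ArithmeticFunction.IsMultiplicative.eq_iff_eq_on_prime_powers _ (hφmul.mul hιmul) _
      ArithmeticFunction.isMultiplicative_one]
    intro p i hp
    rw [mul_apply_prime_pow _ _ hp]
    have : ∀ j ∈ Finset.range (i + 1), φ (p ^ j) * ι (p ^ (i - j)) =
        (f p / 2) ^ j * (-(f p) / 2) ^ (i - j) * (i.choose j : ℂ) / Nat.factorial i := by
      intro j hj
      rw [Finset.mem_range] at hj
      rw [hφval' hp, hιval hp]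
      have h1 : (Nat.factorial j : ℂ) ≠ 0 := Nat.cast_ne_zero.mpr (Nat.factorial_ne_zero j)
      have h2 : (Nat.factorial (i - j) : ℂ) ≠ 0 := Nat.cast_ne_zero.mpr (Nat.factorial_ne_zero _)
      have h3 : (Nat.factorial i : ℂ) ≠ 0 := Nat.cast_ne_zero.mpr (Nat.factorial_ne_zero i)
      have hch : (i.choose j : ℂ) = Nat.factorial i / (Nat.factorial j * Nat.factorial (i - j)) :=
        Nat.cast_choose ℂ (by omega)
      rw [hch, div_pow, div_pow]
      field_simp
    rw [Finset.sum_congr rfl this, ← Finset.sum_div, ← add_pow]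
    have : f p / 2 + -(f p) / 2 = 0 := by ring
    rw [this]
    rcases Nat.eq_zero_or_pos i with rfl | hi
    · simp
    · rw [zero_pow (by omega)]
      simp [ArithmeticFunction.one_apply, (Nat.one_lt_pow hi.ne' hp.one_lt).ne', hp.ne_one, hi.ne']
  -- η = ι * ι
  set η := ι * ι with ηdef
  have hηmul : η.IsMultiplicative := hιmul.mul hιmul
  have hηval : ∀ {p : ℕ}, p.Prime → ∀ k, η (p ^ k) = (-1) ^ k * f p ^ k / Nat.factorial k := by
    intro p hp k
    rw [ηdef, mul_apply_prime_pow _ _ hp]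
    have : ∀ j ∈ Finset.range (k + 1), ι (p ^ j) * ι (p ^ (k - j)) =
        (-(f p) / 2) ^ j * (-(f p) / 2) ^ (k - j) * (k.choose j : ℂ) / Nat.factorial k := by
      intro j hj
      rw [Finset.mem_range] at hj
      rw [hιval hp, hιval hp]
      have h1 : (Nat.factorial j : ℂ) ≠ 0 := Nat.cast_ne_zero.mpr (Nat.factorial_ne_zero j)
      have h2 : (Nat.factorial (k - j) : ℂ) ≠ 0 := Nat.cast_ne_zero.mpr (Nat.factorial_ne_zero _)
      have h3 : (Nat.factorial k : ℂ) ≠ 0 := Nat.cast_ne_zero.mpr (Nat.factorial_ne_zero k)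
      have hch : (k.choose j : ℂ) = Nat.factorial k / (Nat.factorial j * Nat.factorial (k - j)) :=
        Nat.cast_choose ℂ (by omega)
      rw [hch, div_pow, div_pow]
      field_simp
    rw [Finset.sum_congr rfl this, ← Finset.sum_div, ← add_pow]
    have : -(f p) / 2 + -(f p) / 2 = -(f p) := by ring
    rw [this]
    rw [neg_pow]
  -- define ψ
  refine ⟨f * η, hfmul.mul hηmul, ?_, ?_, ?_⟩
  · intro p hp
    have := mul_apply_prime_pow f η hp 1
    rw [pow_one] at this
    rw [this, Finset.sum_range_succ, Finset.sum_range_one]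
    rw [Nat.sub_zero, Nat.sub_self, hηval hp 1, hηval hp 0, pow_zero, pow_one, hfmul.1]
    simp [Nat.factorial]
  · intro p ν hp hν
    rw [mul_comm f η, mul_apply_prime_pow _ _ hp]
    refine Finset.sum_congr rfl fun j hj => ?_
    rw [hηval hp j]
    ring
  · rw [show φ * φ * (f * η) = f * ((φ * ι) * (φ * ι)) by ring, key]
    ring
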